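/- Let u : [y,x] → ℝ be continuous and piecewise C² with u'(y) = 0 (at the local maximum y), u'' = -1 on regular points, and nonnegative jumps of u' at singular points. Then for all s ∈ [0, x-y], u(y+s) ≥ u(y) - s²/2; in particular u(y) - u(x) ≤ (x-y)²/2. -/

import Mathlib

open Set Filter

/-- Constancy on a subinterval where the derivative (within the big interval) is zero. -/
lemma aux_const_8 (g : ℝ → ℝ) (a b c d : ℝ) (hac : a ≤ c) (hdb : d ≤ b)
    (hd' : ∀ s ∈ Set.Icc c d, HasDerivWithinAt g 0 (Set.Icc a b) s) :
    ∀ t ∈ Set.Icc c d, g t = g c := by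
  apply constant_of_has_deriv_right_zero
  · exact fun s hs => ((hd' s hs).continuousWithinAt).mono (Set.Icc_subset_Icc hac hdb)
  · intro s hs
    have h0 : s ∈ Set.Ico s b := ⟨le_refl s, lt_of_lt_of_le hs.2 hdb⟩
    have h1 : Set.Icc a b ∈ nhdsWithin s (Set.Ici s) :=
      mem_of_superset (Icc_mem_nhdsGE_of_mem h0)
        (Set.Icc_subset_Icc (hac.trans hs.1) le_rfl)
    exact (hd' s ⟨hs.1, hs.2.le⟩).mono_of_mem_nhdsWithin h1

/-- A function with zero derivative off a finite singular set, nonneg jumps,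
and nonnegative value at the left endpoint is nonnegative. -/
lemma aux_nonneg_8 : ∀ (n : ℕ) (T : Finset ℝ), T.card ≤ n → ∀ (g : ℝ → ℝ) (a b : ℝ),
    ((T : Set ℝ) ⊆ Set.Ioo a b) →
    (∀ s ∈ Set.Icc a b \ (T : Set ℝ), HasDerivWithinAt g 0 (Set.Icc a b) s) →
    (∀ s ∈ T, ∃ gl gr : ℝ, Tendsto g (nhdsWithin s (Set.Iio s)) (nhds gl) ∧
      Tendsto g (nhdsWithin s (Set.Ioi s)) (nhds gr) ∧ gl ≤ gr) →
    0 ≤ g a → ∀ t ∈ Set.Icc a b \ (T : Set ℝ), 0 ≤ g t := by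
  intro n
  induction n with
  | zero =>
    intro T hT g a b hTs hd hj ha t ht
    have hTe : T = ∅ := Finset.card_eq_zero.mp (Nat.le_zero.mp hT)
    subst hTe
    have key := aux_const_8 g a b a t le_rfl ht.1.2
      (fun s hs => hd s ⟨⟨hs.1, hs.2.trans ht.1.2⟩, by simp⟩)
    have := key t ⟨ht.1.1, le_rfl⟩
    linarith
  | succ n ih =>
    intro T hT g a b hTs hd hj ha t ht
    by_cases hTe : T.Nonempty
    · set m := T.min' hTe with hmdef
      have hmT : m ∈ T := T.min'_mem hTe
      have hm : m ∈ Set.Ioo a b := hTs hmT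
      have hmin : ∀ s ∈ T, m ≤ s := fun s hs => T.min'_le s hs
      -- values on [a, m)
      have h2 : ∀ r, a ≤ r → r < m → g r = g a := by
        intro r har hrm
        have key := aux_const_8 g a b a r le_rfl (hrm.le.trans hm.2.le)
          (fun s hs => hd s ⟨⟨hs.1, (hs.2.trans (hrm.le.trans hm.2.le))⟩, by
            intro hsT
            exact absurd (hmin s hsT) (not_le.mpr (lt_of_le_of_lt hs.2 hrm))⟩)
        exact key r ⟨har, le_rfl⟩
      obtain ⟨gl, gr, hgl, hgr, hlr⟩ := hj m hmT
      have hglval : gl = g a := by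
        have hIoo : Set.Ioo a m ∈ nhdsWithin m (Set.Iio m) :=
          Ioo_mem_nhdsLT_of_mem ⟨hm.1, le_rfl⟩
        have h1 : Tendsto g (nhdsWithin m (Set.Iio m)) (nhds (g a)) := by
          refine Tendsto.congr' ?_ tendsto_const_nhds
          filter_upwards [hIoo] with r hr
          exact (h2 r hr.1.le hr.2).symm
        exact tendsto_nhds_unique hgl h1
      -- next singular point (or b)
      have hme : ∀ s ∈ T.erase m, m < s := fun s hs =>
        lt_of_le_of_ne (hmin s (Finset.mem_of_mem_erase hs)) (Finset.ne_of_mem_erase hs).symm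
      set m₂ := if h : (T.erase m).Nonempty then (T.erase m).min' h else b with hm₂def
      have hmm₂ : m < m₂ := by
        rw [hm₂def]; split_ifs with h
        · exact hme _ ((T.erase m).min'_mem h)
        · exact hm.2
      have hm₂b : m₂ ≤ b := by
        rw [hm₂def]; split_ifs with h
        · exact (hTs (Finset.mem_of_mem_erase ((T.erase m).min'_mem h))).2.le
        · exact le_rfl
      have hm₂le : ∀ s ∈ T.erase m, m₂ ≤ s := by
        intro s hs
        rw [hm₂def]; split_ifs with h
        · exact (T.erase m).min'_le s hs
        · exact absurd ⟨s, hs⟩ h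
      set a' := (m + m₂) / 2 with ha'def
      have hma' : m < a' := by rw [ha'def]; linarith
      have ha'm₂ : a' < m₂ := by rw [ha'def]; linarith
      have ha'b : a' ≤ b := ha'm₂.le.trans hm₂b
      have haa' : a < a' := hm.1.trans hma'
      -- constancy on (m, a']
      have hreg : ∀ r, m < r → r ≤ a' → ∀ s ∈ Set.Icc r a', s ∈ Set.Icc a b \ (T : Set ℝ) := by
        intro r hmr hra' s hs
        refine ⟨⟨(hm.1.trans hmr).le.trans hs.1, hs.2.trans ha'b⟩, ?_⟩
        intro hsT
        rcases eq_or_ne s m with h | h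
        · exact absurd (h ▸ hs.1) (not_le.mpr hmr)
        · exact absurd (hm₂le s (Finset.mem_erase.mpr ⟨h, hsT⟩))
            (not_le.mpr (lt_of_le_of_lt hs.2 ha'm₂))
      have h5 : ∀ r, m < r → r ≤ a' → g r = g a' := by
        intro r hmr hra'
        have key := aux_const_8 g a b r a' ((hm.1.trans hmr).le) ha'b
          (fun s hs => hd s (hreg r hmr hra' s hs))
        exact (key a' ⟨hra', le_rfl⟩).symm
      have hga' : 0 ≤ g a' := by
        have hIoo : Set.Ioo m a' ∈ nhdsWithin m (Set.Ioi m) :=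
          Ioo_mem_nhdsGT_of_mem ⟨le_rfl, hma'⟩
        have h1 : Tendsto g (nhdsWithin m (Set.Ioi m)) (nhds (g a')) := by
          refine Tendsto.congr' ?_ tendsto_const_nhds
          filter_upwards [hIoo] with r hr
          exact (h5 r hr.1 hr.2.le).symm
        have : gr = g a' := tendsto_nhds_unique hgr h1
        linarith
      -- induction on the rest
      have hcard : (T.erase m).card ≤ n := by
        have := Finset.card_erase_of_mem hmT
        omega
      have h6 := ih (T.erase m) hcard g a' b
        (fun s hs => by
          have hs' : s ∈ T.erase m := by exact_mod_cast hs
          exact ⟨ha'm₂.trans_le (hm₂le s hs'), (hTs (Finset.mem_of_mem_erase hs')).2⟩)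
        (fun s hs => by
          refine (hd s ⟨⟨haa'.le.trans hs.1.1, hs.1.2⟩, ?_⟩).mono
            (Set.Icc_subset_Icc haa'.le le_rfl)
          intro hsT
          rcases eq_or_ne s m with h | h
          · exact absurd (h ▸ hs.1.1) (not_le.mpr hma')
          · exact hs.2 (by exact_mod_cast Finset.mem_erase.mpr ⟨h, hsT⟩))
        (fun s hs => hj s (Finset.mem_of_mem_erase hs)) hga'
      -- conclude
      rcases lt_trichotomy t m with h | h | h
      · rw [h2 t ht.1.1 h]; exact ha
      · exact absurd (h ▸ hmT) (fun hc => ht.2 (Finset.mem_coe.mpr hc))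
      · rcases le_or_gt t a' with h' | h'
        · rw [h5 t h h']; exact hga'
        · refine h6 t ⟨⟨h'.le, ht.1.2⟩, ?_⟩
          intro hc
          exact ht.2 (Finset.mem_coe.mpr (Finset.mem_of_mem_erase (by exact_mod_cast hc)))
    · rw [Finset.not_nonempty_iff_eq_empty] at hTe
      exact ih T (by simp [hTe]) g a b hTs hd hj ha t ht

/-- Monotonicity with a finite exceptional set. -/
lemma aux_mono_8 : ∀ (n : ℕ) (T : Finset ℝ), T.card ≤ n → ∀ (f f' : ℝ → ℝ) (a b : ℝ),
    ((T : Set ℝ) ⊆ Set.Ioo a b) → ContinuousOn f (Set.Icc a b) →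
    (∀ s ∈ Set.Ioo a b \ (T : Set ℝ), HasDerivWithinAt f (f' s) (Set.Icc a b) s) →
    (∀ s ∈ Set.Ioo a b \ (T : Set ℝ), 0 ≤ f' s) →
    MonotoneOn f (Set.Icc a b) := by
  intro n
  induction n with
  | zero =>
    intro T hT f f' a b hTs hc hd hf'
    have hTe : T = ∅ := Finset.card_eq_zero.mp (Nat.le_zero.mp hT)
    subst hTe
    refine monotoneOn_of_hasDerivWithinAt_nonneg (convex_Icc a b) hc
      (f' := f') (fun s hs => ?_) (fun s hs => ?_)
    · rw [interior_Icc] at hs ⊢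
      exact (hd s ⟨hs, by simp⟩).mono Set.Ioo_subset_Icc_self
    · rw [interior_Icc] at hs
      exact hf' s ⟨hs, by simp⟩
  | succ n ih =>
    intro T hT f f' a b hTs hc hd hf'
    by_cases hTe : T.Nonempty
    · set m := T.min' hTe with hmdef
      have hmT : m ∈ T := T.min'_mem hTe
      have hm : m ∈ Set.Ioo a b := hTs hmT
      have hmin : ∀ s ∈ T, m ≤ s := fun s hs => T.min'_le s hs
      have mono1 : MonotoneOn f (Set.Icc a m) := by
        refine monotoneOn_of_hasDerivWithinAt_nonneg (convex_Icc a m)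
          (hc.mono (Set.Icc_subset_Icc le_rfl hm.2.le)) (f' := f') (fun s hs => ?_) (fun s hs => ?_)
        · rw [interior_Icc] at hs ⊢
          have hs' : s ∈ Set.Ioo a b \ (T : Set ℝ) :=
            ⟨⟨hs.1, hs.2.trans hm.2⟩, fun hc => absurd (hmin s hc) (not_le.mpr hs.2)⟩
          exact (hd s hs').mono (fun r hr => ⟨hr.1.le, hr.2.le.trans hm.2.le⟩)
        · rw [interior_Icc] at hs
          exact hf' s ⟨⟨hs.1, hs.2.trans hm.2⟩, fun hc => absurd (hmin s hc) (not_le.mpr hs.2)⟩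
      have hcard : (T.erase m).card ≤ n := by
        have := Finset.card_erase_of_mem hmT
        omega
      have mono2 : MonotoneOn f (Set.Icc m b) := by
        refine ih (T.erase m) hcard f f' m b ?_ (hc.mono (Set.Icc_subset_Icc hm.1.le le_rfl))
          (fun s hs => ?_) (fun s hs => ?_)
        · intro s hs
          have hs' : s ∈ T.erase m := by exact_mod_cast hs
          exact ⟨lt_of_le_of_ne (hmin s (Finset.mem_of_mem_erase hs'))
            (Finset.ne_of_mem_erase hs').symm, (hTs (Finset.mem_of_mem_erase hs')).2⟩
        · have hs' : s ∈ Set.Ioo a b \ (T : Set ℝ) := by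
            refine ⟨⟨hm.1.trans hs.1.1, hs.1.2⟩, fun hc => ?_⟩
            exact hs.2 (by exact_mod_cast Finset.mem_erase.mpr ⟨ne_of_gt hs.1.1, hc⟩)
          exact (hd s hs').mono (Set.Icc_subset_Icc hm.1.le le_rfl)
        · refine hf' s ⟨⟨hm.1.trans hs.1.1, hs.1.2⟩, fun hc => ?_⟩
          exact hs.2 (by exact_mod_cast Finset.mem_erase.mpr ⟨ne_of_gt hs.1.1, hc⟩)
      intro p hp q hq hpq
      rcases le_total q m with h | h
      · exact mono1 ⟨hp.1, hpq.trans h⟩ ⟨hq.1, h⟩ hpq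
      · rcases le_total p m with h' | h'
        · calc f p ≤ f m := mono1 ⟨hp.1, h'⟩ ⟨hm.1.le, le_rfl⟩ h'
            _ ≤ f q := mono2 ⟨le_rfl, hm.2.le⟩ ⟨h, hq.2⟩ h
        · exact mono2 ⟨h', hp.2⟩ ⟨h, hq.2⟩ hpq
    · rw [Finset.not_nonempty_iff_eq_empty] at hTe
      exact ih T (by simp [hTe]) f f' a b hTs hc hd hf'

/-- Let `u` be continuous and piecewise `C²` on `[y,x]` (singular set `S ⊆ (y,x)` finite),
with `u'(y) = 0`, `u'' = -1` at regular points, and nonnegative jumps of `u'` at the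
singular points.  Then `u(y+s) ≥ u(y) - s²/2` for all `s ∈ [0, x-y]`; in particular
`u(y) - u(x) ≤ (x-y)²/2`. -/
theorem stmt_8 (u v : ℝ → ℝ) (y x : ℝ) (S : Finset ℝ)
    (hyx : y < x)
    (hS : (S : Set ℝ) ⊆ Set.Ioo y x)
    (hcont : ContinuousOn u (Set.Icc y x))
    (hderiv : ∀ s ∈ Set.Icc y x \ (S : Set ℝ), HasDerivWithinAt u (v s) (Set.Icc y x) s)
    (hode : ∀ s ∈ Set.Icc y x \ (S : Set ℝ), HasDerivWithinAt v (-1) (Set.Icc y x) s)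
    (hvy : v y = 0)
    (hjump : ∀ s ∈ S, ∃ vl vr : ℝ,
      Tendsto v (nhdsWithin s (Set.Iio s)) (nhds vl) ∧
      Tendsto v (nhdsWithin s (Set.Ioi s)) (nhds vr) ∧ vl ≤ vr) :
    (∀ s ∈ Set.Icc 0 (x - y), u y - s ^ 2 / 2 ≤ u (y + s)) ∧
    u y - u x ≤ (x - y) ^ 2 / 2 := by
  set g : ℝ → ℝ := fun t => v t + (t - y) with hgdef
  have hgd : ∀ s ∈ Set.Icc y x \ (S : Set ℝ), HasDerivWithinAt g 0 (Set.Icc y x) s := by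
    intro s hs
    have := (hode s hs).add ((hasDerivWithinAt_id s (Set.Icc y x)).sub_const y)
    simp at this; exact this
  have hgj : ∀ s ∈ S, ∃ gl gr : ℝ, Tendsto g (nhdsWithin s (Set.Iio s)) (nhds gl) ∧
      Tendsto g (nhdsWithin s (Set.Ioi s)) (nhds gr) ∧ gl ≤ gr := by
    intro s hsS
    obtain ⟨vl, vr, hl, hr, hlr⟩ := hjump s hsS
    have hsub : Tendsto (fun t : ℝ => t - y) (nhds s) (nhds (s - y)) :=
      (tendsto_id.sub_const y)
    exact ⟨vl + (s - y), vr + (s - y),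
      hl.add (hsub.mono_left nhdsWithin_le_nhds),
      hr.add (hsub.mono_left nhdsWithin_le_nhds), by linarith⟩
  have hga : 0 ≤ g y := by simp [hgdef, hvy]
  have hg : ∀ t ∈ Set.Icc y x \ (S : Set ℝ), 0 ≤ g t :=
    aux_nonneg_8 S.card S le_rfl g y x hS hgd hgj hga
  -- monotone function w
  set w : ℝ → ℝ := fun t => u t + (t - y) ^ 2 / 2 with hwdef
  have hwc : ContinuousOn w (Set.Icc y x) := by
    apply hcont.add
    exact (((continuous_id.sub continuous_const).pow 2).div_const 2).continuousOn
  have hwd : ∀ s ∈ Set.Ioo y x \ (S : Set ℝ),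
      HasDerivWithinAt w (g s) (Set.Icc y x) s := by
    intro s hs
    have hs' : s ∈ Set.Icc y x \ (S : Set ℝ) := ⟨Set.Ioo_subset_Icc_self hs.1, hs.2⟩
    have h1 : HasDerivAt (fun t : ℝ => (t - y) ^ 2 / 2) (s - y) s := by
      have := (((hasDerivAt_id s).sub_const y).pow 2).div_const 2
      simpa using this
    exact (hderiv s hs').add h1.hasDerivWithinAt
  have hmono : MonotoneOn w (Set.Icc y x) :=
    aux_mono_8 S.card S le_rfl w g y x hS hwc hwd
      (fun s hs => hg s ⟨Set.Ioo_subset_Icc_self hs.1, hs.2⟩)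
  have main : ∀ s ∈ Set.Icc 0 (x - y), u y - s ^ 2 / 2 ≤ u (y + s) := by
    intro s hs
    have hmem : y + s ∈ Set.Icc y x := ⟨le_add_of_nonneg_right hs.1, by linarith [hs.2]⟩
    have := hmono ⟨le_rfl, hyx.le⟩ hmem (le_add_of_nonneg_right hs.1)
    have e1 : y + s - y = s := by ring
    simp only [hwdef] at this
    rw [e1, sub_self] at this
    norm_num at this
    linarith
  refine ⟨main, ?_⟩
  have := main (x - y) ⟨by linarith, le_rfl⟩
  have e : y + (x - y) = x := by ring
  rw [e] at this
  linarith
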